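/- Let Q > 2, R > 0, and let z₀ be the first positive zero of the Bessel function J₀. Then f(ρ) = ρ^{−(Q−2)/2} J₀(ρ z₀/R) is positive on (0,R) and solves (ρ^{Q−1} f')' + ρ^{Q−1} ((Q−2)²/(4ρ²) + z₀²/R²) f = 0 on (0,R); i.e., (1, (Q−2)²/(4ρ²) + z₀²/R²) is a Q-dimensional Bessel pair on (0,R). -/

import Mathlib

open Real

/-- Brezis–Vázquez-type Bessel pair: if `J₀` is the Bessel function of the
first kind of order zero (a `C²` solution of `J₀'' + (1/s)J₀' + J₀ = 0` with
`J₀(0) = 1`) and `z₀` is its first positive zero, then for `Q > 2`, `R > 0`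
the function `f(ρ) = ρ^{−(Q−2)/2} J₀(ρ z₀/R)` is positive on `(0,R)` and solves
`(ρ^{Q−1} f')' + ρ^{Q−1} ((Q−2)²/(4ρ²) + z₀²/R²) f = 0` on `(0,R)`; i.e.
`(1, (Q−2)²/(4ρ²) + z₀²/R²)` is a `Q`-dimensional Bessel pair on `(0,R)`. -/
theorem bessel_pair_brezis_vazquez (Q R : ℝ) (hQ : 2 < Q) (hR : 0 < R)
    (J₀ : ℝ → ℝ) (hJ : ContDiff ℝ 2 J₀)
    (hODE : ∀ s : ℝ, s ≠ 0 → deriv (deriv J₀) s + (1 / s) * deriv J₀ s + J₀ s = 0)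
    (hJ0 : J₀ 0 = 1)
    (z₀ : ℝ) (hz₀ : 0 < z₀) (hzero : J₀ z₀ = 0)
    (hfirst : ∀ s : ℝ, 0 ≤ s → s < z₀ → 0 < J₀ s) :
    ∀ ρ ∈ Set.Ioo (0:ℝ) R,
      (0 < ρ ^ (-(Q - 2) / 2) * J₀ (ρ * z₀ / R) ∧
        deriv (fun r : ℝ =>
            r ^ (Q - 1) * deriv (fun s : ℝ => s ^ (-(Q - 2) / 2) * J₀ (s * z₀ / R)) r) ρ
          + ρ ^ (Q - 1) * ((Q - 2) ^ 2 / (4 * ρ ^ 2) + z₀ ^ 2 / R ^ 2)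
            * (ρ ^ (-(Q - 2) / 2) * J₀ (ρ * z₀ / R)) = 0) := by
  have hJd : Differentiable ℝ J₀ := hJ.differentiable (by norm_num)
  have hJ1d : Differentiable ℝ (deriv J₀) := by
    have h2 : ContDiff ℝ (1 + 1) J₀ := by
      rw [show ((1 : WithTop ℕ∞) + 1) = 2 by norm_num]; exact hJ
    exact (contDiff_succ_iff_deriv.mp h2).2.2.differentiable one_ne_zero
  intro ρ hρ
  obtain ⟨hρ0, hρR⟩ := hρ
  set a : ℝ := -(Q - 2) / 2 with ha
  have hs0 : 0 < ρ * z₀ / R := by positivity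
  have hslt : ρ * z₀ / R < z₀ := by
    rw [div_lt_iff₀ hR]
    nlinarith
  refine ⟨mul_pos (Real.rpow_pos_of_pos hρ0 _) (hfirst _ hs0.le hslt), ?_⟩
  have h2ρ : HasDerivAt (fun s : ℝ => s * z₀ / R) (z₀ / R) ρ := by
    simpa using ((hasDerivAt_id ρ).mul_const z₀).div_const R
  have key : ∀ r : ℝ, 0 < r →
      HasDerivAt (fun s : ℝ => s ^ a * J₀ (s * z₀ / R))
        (a * r ^ (a - 1) * J₀ (r * z₀ / R)
          + r ^ a * (deriv J₀ (r * z₀ / R) * (z₀ / R))) r := by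
    intro r hr
    have h1 : HasDerivAt (fun s : ℝ => s ^ a) (a * r ^ (a - 1)) r :=
      Real.hasDerivAt_rpow_const (Or.inl hr.ne')
    have h2 : HasDerivAt (fun s : ℝ => s * z₀ / R) (z₀ / R) r := by
      simpa using ((hasDerivAt_id r).mul_const z₀).div_const R
    have h3 : HasDerivAt (fun s : ℝ => J₀ (s * z₀ / R))
        (deriv J₀ (r * z₀ / R) * (z₀ / R)) r :=
      (hJd (r * z₀ / R)).hasDerivAt.comp r h2
    exact h1.mul h3
  have hEq : (fun r : ℝ => r ^ (Q - 1) * deriv (fun s : ℝ => s ^ a * J₀ (s * z₀ / R)) r)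
      =ᶠ[nhds ρ] (fun r : ℝ => r ^ (Q - 1) *
        (a * r ^ (a - 1) * J₀ (r * z₀ / R) + r ^ a * (deriv J₀ (r * z₀ / R) * (z₀ / R)))) := by
    filter_upwards [Ioi_mem_nhds hρ0] with r hr
    rw [(key r hr).deriv]
  have hG : HasDerivAt (fun r : ℝ => r ^ (Q - 1) *
        (a * r ^ (a - 1) * J₀ (r * z₀ / R) + r ^ a * (deriv J₀ (r * z₀ / R) * (z₀ / R))))
      ((Q - 1) * ρ ^ (Q - 1 - 1) *
          (a * ρ ^ (a - 1) * J₀ (ρ * z₀ / R) + ρ ^ a * (deriv J₀ (ρ * z₀ / R) * (z₀ / R)))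
        + ρ ^ (Q - 1) *
          ((a * ((a - 1) * ρ ^ (a - 1 - 1)) * J₀ (ρ * z₀ / R)
              + a * ρ ^ (a - 1) * (deriv J₀ (ρ * z₀ / R) * (z₀ / R)))
            + (a * ρ ^ (a - 1) * (deriv J₀ (ρ * z₀ / R) * (z₀ / R))
              + ρ ^ a * (deriv (deriv J₀) (ρ * z₀ / R) * (z₀ / R) * (z₀ / R))))) ρ := by
    have hP : HasDerivAt (fun r : ℝ => r ^ (Q - 1)) ((Q - 1) * ρ ^ (Q - 1 - 1)) ρ :=
      Real.hasDerivAt_rpow_const (Or.inl hρ0.ne')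
    have hA1 : HasDerivAt (fun r : ℝ => a * r ^ (a - 1)) (a * ((a - 1) * ρ ^ (a - 1 - 1))) ρ :=
      (Real.hasDerivAt_rpow_const (Or.inl hρ0.ne')).const_mul a
    have hJc : HasDerivAt (fun r : ℝ => J₀ (r * z₀ / R))
        (deriv J₀ (ρ * z₀ / R) * (z₀ / R)) ρ :=
      (hJd (ρ * z₀ / R)).hasDerivAt.comp ρ h2ρ
    have hKc : HasDerivAt (fun r : ℝ => deriv J₀ (r * z₀ / R) * (z₀ / R))
        (deriv (deriv J₀) (ρ * z₀ / R) * (z₀ / R) * (z₀ / R)) ρ :=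
      ((hJ1d (ρ * z₀ / R)).hasDerivAt.comp ρ h2ρ).mul_const (z₀ / R)
    have hr : HasDerivAt (fun r : ℝ => r ^ a) (a * ρ ^ (a - 1)) ρ :=
      Real.hasDerivAt_rpow_const (Or.inl hρ0.ne')
    exact hP.mul ((hA1.mul hJc).add (hr.mul hKc))
  rw [hEq.deriv_eq, hG.deriv]
  have hODE' := hODE (ρ * z₀ / R) hs0.ne'
  have hL : deriv (deriv J₀) (ρ * z₀ / R)
      = -((1 / (ρ * z₀ / R)) * deriv J₀ (ρ * z₀ / R)) - J₀ (ρ * z₀ / R) := by linarith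
  rw [hL]
  have he1 : ρ ^ (Q - 1) = ρ ^ (Q - 2) * ρ := by
    rw [show Q - 1 = (Q - 2) + 1 by ring, Real.rpow_add hρ0, Real.rpow_one]
  have he0 : ρ ^ (Q - 1 - 1) = ρ ^ (Q - 2) := by rw [show Q - 1 - 1 = Q - 2 by ring]
  have he2 : ρ ^ (a - 1) = ρ ^ a / ρ := by
    rw [show a - 1 = a + (-1) by ring, Real.rpow_add hρ0, Real.rpow_neg_one, div_eq_mul_inv]
  have he3 : ρ ^ (a - 1 - 1) = ρ ^ a / ρ ^ 2 := by
    rw [show a - 1 - 1 = a + (-2) by ring, Real.rpow_add hρ0,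
      show (-2 : ℝ) = -((2 : ℕ) : ℝ) by norm_num, Real.rpow_neg hρ0.le, Real.rpow_natCast,
      div_eq_mul_inv]
  rw [he0, he1, he2, he3, ha]
  have hz0' : z₀ ≠ 0 := hz₀.ne'
  have hR' : R ≠ 0 := hR.ne'
  have hρ' : ρ ≠ 0 := hρ0.ne'
  field_simp
  ring
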